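/- Dinkelbach's lemma: let P be a compact topological space, f, g : P → ℝ continuous with g(μ) > 0 for all μ ∈ P, P nonempty, and define F(q) := sup over μ ∈ P of (f(μ) − q·g(μ)). Then for q₀ ∈ ℝ, q₀ equals the supremum over μ ∈ P of f(μ)/g(μ) if and only if F(q₀) = 0. -/

import Mathlib

theorem dinkelbach_lemma
    {P : Type*} [TopologicalSpace P] [CompactSpace P] [Nonempty P]
    (f g : P → ℝ) (hf : Continuous f) (hg : Continuous g)
    (hgpos : ∀ μ, 0 < g μ) (q₀ : ℝ) :
    q₀ = (⨆ μ : P, f μ / g μ) ↔ (⨆ μ : P, f μ - q₀ * g μ) = 0 := by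
  obtain ⟨a, ha⟩ := (hf.div hg fun x => (hgpos x).ne').exists_forall_ge
    (by rw [Filter.cocompact_eq_bot]; exact Filter.tendsto_bot)
  obtain ⟨b, hb⟩ := (hf.sub (continuous_const.mul hg)).exists_forall_ge
    (by rw [Filter.cocompact_eq_bot]; exact Filter.tendsto_bot)
  simp only [Pi.div_apply] at ha
  have hS : (⨆ μ : P, f μ / g μ) = f a / g a :=
    le_antisymm (ciSup_le ha)
      (le_ciSup ⟨f a / g a, Set.forall_mem_range.2 ha⟩ a)
  have hF : (⨆ μ : P, f μ - q₀ * g μ) = f b - q₀ * g b :=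
    le_antisymm (ciSup_le hb)
      (le_ciSup ⟨f b - q₀ * g b, Set.forall_mem_range.2 hb⟩ b)
  rw [hS, hF]
  constructor
  · intro hq
    have h1 : f b - q₀ * g b ≤ 0 := by
      have := (div_le_div_iff_of_pos_right (hgpos b)).mpr (ha b)
      nlinarith [ha b, hgpos b, (div_le_iff₀ (hgpos b)).mp (hq ▸ ha b)]
    have h2 : f a - q₀ * g a = 0 := by
      have := hgpos a
      rw [hq, div_mul_cancel₀ _ this.ne', sub_self]
    linarith [show f a - q₀ * g a ≤ f b - q₀ * g b from hb a]
  · intro h0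
    have hq : q₀ = f b / g b := by
      have := hgpos b
      field_simp
      linarith
    have hle : ∀ μ, f μ / g μ ≤ q₀ := fun μ => by
      have h : f μ - q₀ * g μ ≤ f b - q₀ * g b := hb μ
      have := hgpos μ
      rw [div_le_iff₀ this]
      linarith
    linarith [ha b, hle a, hq]
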